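/- arXiv:2108.00219 — 2 statements merged into one kernel-verified Lean document; each statement's English description precedes it below -/
import Mathlib

section
/- The NN-diversity function $D_{NN}(S) = \sum_{u \in V} \big(d_{max} - \min_{v \in \sigma(S)} d(u, v)\big)$ is submodular: for all $S \subseteq T$ with $\sigma(S) \neq \emptyset$ and $x \notin T$, $D_{NN}(S \cup \{x\}) - D_{NN}(S) \ge D_{NN}(T \cup \{x\}) - D_{NN}(T)$. -/
open Finset

/-- Submodularity part of Theorem 2 in GRAIN: the NN-diversity function
`D_NN(S) = ∑_{u ∈ V} (d_max - min_{v ∈ σ(S)} d(u,v))` is submodular. -/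
theorem dnn_submodular {V : Type*} [Fintype V] [DecidableEq V] [Nonempty V]
    (d : V → V → ℝ) (hd : ∀ u v, 0 ≤ d u v) (σ : Finset V → Finset V)
    (hmono : ∀ ⦃S T : Finset V⦄, S ⊆ T → σ S ⊆ σ T)
    (hunion : ∀ S T : Finset V, σ (S ∪ T) = σ S ∪ σ T)
    (hsing : ∀ x : V, (σ {x}).Nonempty)
    (dmax : ℝ)
    (hdmax : dmax = Finset.univ.sup' Finset.univ_nonempty (fun p : V × V => d p.1 p.2))
    (S T : Finset V) (hST : S ⊆ T) (x : V) (hx : x ∉ T) (hS : (σ S).Nonempty) :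
    (∑ u : V, (dmax - (σ (insert x T)).inf'
          ((hS.mono (hmono hST)).mono (hmono (subset_insert x T))) (fun v => d u v)) -
        ∑ u : V, (dmax - (σ T).inf' (hS.mono (hmono hST)) (fun v => d u v))) ≤
      (∑ u : V, (dmax - (σ (insert x S)).inf'
          (hS.mono (hmono (subset_insert x S))) (fun v => d u v)) -
        ∑ u : V, (dmax - (σ S).inf' hS (fun v => d u v))) := by
  rw [← Finset.sum_sub_distrib, ← Finset.sum_sub_distrib]
  apply Finset.sum_le_sum
  intro u _
  have hT : (σ T).Nonempty := hS.mono (hmono hST)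
  have hxS : σ (insert x S) = σ {x} ∪ σ S := by
    rw [Finset.insert_eq, hunion]
  have hxT : σ (insert x T) = σ {x} ∪ σ T := by
    rw [Finset.insert_eq, hunion]
  have eS : (σ (insert x S)).inf' (hS.mono (hmono (subset_insert x S)))
      (fun v => d u v)
      = (σ {x}).inf' (hsing x) (fun v => d u v) ⊓ (σ S).inf' hS (fun v => d u v) := by
    simp only [hxS]
    exact Finset.inf'_union (hsing x) hS _
  have eT : (σ (insert x T)).inf'
      ((hS.mono (hmono hST)).mono (hmono (subset_insert x T))) (fun v => d u v)
      = (σ {x}).inf' (hsing x) (fun v => d u v) ⊓ (σ T).inf' hT (fun v => d u v) := by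
    simp only [hxT]
    exact Finset.inf'_union (hsing x) hT _
  rw [eS, eT]
  have hTS : (σ T).inf' hT (fun v => d u v) ≤ (σ S).inf' hS (fun v => d u v) :=
    Finset.inf'_mono _ (hmono hST) _
  set a := (σ {x}).inf' (hsing x) (fun v => d u v)
  set b := (σ S).inf' hS (fun v => d u v)
  set c := (σ T).inf' hT (fun v => d u v)
  rcases le_total a c with h | h <;> rcases le_total a b with h' | h' <;>
    simp [inf_eq_left.mpr, inf_eq_right.mpr, min_eq_left, min_eq_right, h, h'] <;>
    linarith
end

section
/- Greedy approximation guarantee: let $F : \mathcal{P}(V) \to \mathbb{R}_{\ge 0}$ be monotone, submodular, with $F(\emptyset) = 0$. The greedy algorithm that at each of $B$ steps adds the element with the largest marginal gain produces a set $S$ with $F(S) \ge (1 - 1/e) \max_{|S^*| = B} F(S^*)$. -/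
open Finset

lemma greedy_aux_sum {V : Type*} [DecidableEq V]
    (F : Finset V → ℝ)
    (hmono : ∀ S T : Finset V, S ⊆ T → F S ≤ F T)
    (hsub : ∀ (S T : Finset V) (x : V), S ⊆ T → x ∉ T →
      F (insert x T) - F T ≤ F (insert x S) - F S)
    (S T : Finset V) :
    F (S ∪ T) ≤ F S + ∑ x ∈ T, (F (insert x S) - F S) := by
  induction T using Finset.induction with
  | empty => simp
  | @insert a T ha ih =>
    have hmarg : F (S ∪ insert a T) - F (S ∪ T) ≤ F (insert a S) - F S := by
      have hrw : S ∪ insert a T = insert a (S ∪ T) := by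
        ext y; simp [or_comm, or_left_comm]
      rw [hrw]
      by_cases haST : a ∈ S ∪ T
      · rw [Finset.insert_eq_self.2 haST]
        have := hmono S (insert a S) (Finset.subset_insert a S)
        linarith
      · exact hsub S (S ∪ T) a Finset.subset_union_left haST
    rw [Finset.sum_insert ha]
    linarith

/-- Nemhauser–Wolsey–Fisher greedy guarantee: for a monotone submodular, nonnegative set
function `F` with `F ∅ = 0`, the greedy algorithm with budget `B` produces a set whose value
is at least `(1 - 1/e)` times the optimum over all sets of size `B`. -/
theorem greedy_approximation {V : Type*} [Fintype V] [DecidableEq V]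
    (F : Finset V → ℝ) (hnn : ∀ S, 0 ≤ F S)
    (hmono : ∀ S T : Finset V, S ⊆ T → F S ≤ F T)
    (hsub : ∀ (S T : Finset V) (x : V), S ⊆ T → x ∉ T →
      F (insert x T) - F T ≤ F (insert x S) - F S)
    (h0 : F ∅ = 0)
    (B : ℕ) (hB : B ≤ Fintype.card V)
    (g : ℕ → Finset V) (hg0 : g 0 = ∅)
    (hstep : ∀ i < B, ∃ x ∉ g i, g (i + 1) = insert x (g i) ∧
      ∀ y ∉ g i, F (insert y (g i)) ≤ F (insert x (g i)))
    (Sstar : Finset V) (hcard : Sstar.card = B) :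
    (1 - (Real.exp 1)⁻¹) * F Sstar ≤ F (g B) := by
  rcases Nat.eq_zero_or_pos B with hB0 | hBpos
  · subst hB0
    have hS : Sstar = ∅ := Finset.card_eq_zero.mp hcard
    have he : (0:ℝ) < (Real.exp 1)⁻¹ := by positivity
    have := hnn (g 0)
    rw [hS, hg0, h0]
    nlinarith
  have hb1 : (1:ℝ) ≤ (B:ℝ) := by exact_mod_cast hBpos
  have hbpos : (0:ℝ) < (B:ℝ) := by linarith
  set r : ℝ := 1 - 1 / (B:ℝ) with hr
  have hr0 : 0 ≤ r := by
    have : 1 / (B:ℝ) ≤ 1 := by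
      rw [div_le_one hbpos]; exact hb1
    rw [hr]; linarith
  have gain : ∀ i < B, F Sstar - F (g i) ≤ (B:ℝ) * (F (g (i+1)) - F (g i)) := by
    intro i hi
    obtain ⟨x, hx, hgi, hmax⟩ := hstep i hi
    have h1 : F Sstar ≤ F (g i ∪ Sstar) := hmono _ _ Finset.subset_union_right
    have h2 := greedy_aux_sum F hmono hsub (g i) Sstar
    have h3 : ∀ y ∈ Sstar, F (insert y (g i)) - F (g i) ≤ F (g (i+1)) - F (g i) := by
      intro y _
      rw [hgi]
      by_cases hy : y ∈ g i
      · rw [Finset.insert_eq_self.2 hy]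
        have := hmono (g i) (insert x (g i)) (Finset.subset_insert x (g i))
        linarith
      · have := hmax y hy
        linarith
    have h4 : ∑ y ∈ Sstar, (F (insert y (g i)) - F (g i)) ≤
        (B:ℝ) * (F (g (i+1)) - F (g i)) := by
      calc ∑ y ∈ Sstar, (F (insert y (g i)) - F (g i))
          ≤ ∑ _y ∈ Sstar, (F (g (i+1)) - F (g i)) := Finset.sum_le_sum h3
        _ = (B:ℝ) * (F (g (i+1)) - F (g i)) := by
            rw [Finset.sum_const, hcard, nsmul_eq_mul]
    have h5 : ∑ y ∈ Sstar, (F (insert y (g i)) - F (g i)) =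
        (∑ y ∈ Sstar, F (insert y (g i))) - (B:ℝ) * F (g i) := by
      rw [Finset.sum_sub_distrib, Finset.sum_const, hcard, nsmul_eq_mul]
    linarith [h2, h4]
  have key : ∀ i ≤ B, F Sstar - F (g i) ≤ r ^ i * F Sstar := by
    intro i hi
    induction i with
    | zero => simp [hg0, h0]
    | succ i ih =>
      have hiB : i < B := hi
      have ih' := ih (le_of_lt hiB)
      have hg := gain i hiB
      have step : F Sstar - F (g (i+1)) ≤ r * (F Sstar - F (g i)) := by
        have hdiv : (F Sstar - F (g i)) / (B:ℝ) ≤ F (g (i+1)) - F (g i) :=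
          (div_le_iff₀ hbpos).mpr (by linarith [hg])
        have : r * (F Sstar - F (g i)) =
            (F Sstar - F (g i)) - (F Sstar - F (g i)) / (B:ℝ) := by
          rw [hr]; ring
        rw [this]; linarith
      calc F Sstar - F (g (i+1)) ≤ r * (F Sstar - F (g i)) := step
        _ ≤ r * (r ^ i * F Sstar) := mul_le_mul_of_nonneg_left ih' hr0
        _ = r ^ (i+1) * F Sstar := by ring
  have final := key B le_rfl
  have hre : r ^ B ≤ (Real.exp 1)⁻¹ := by
    have h1 : r ≤ Real.exp (-(1 / (B:ℝ))) := by
      have := Real.add_one_le_exp (-(1 / (B:ℝ)))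
      rw [hr]; linarith
    have h2 : r ^ B ≤ (Real.exp (-(1 / (B:ℝ)))) ^ B :=
      pow_le_pow_left₀ hr0 h1 B
    rw [← Real.exp_nat_mul] at h2
    have heq : (B:ℝ) * (-(1 / (B:ℝ))) = -1 := by
      field_simp
    rw [heq, Real.exp_neg] at h2
    exact h2
  have hFs : 0 ≤ F Sstar := hnn _
  have := mul_le_mul_of_nonneg_right hre hFs
  linarith
end
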